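/- Let p > 1, γ > 0 and ω > 0, and suppose t₁, t₂ are real numbers with 0 < t₁ < t₂ < 1 satisfying t₁^{p−1} − t₁^{p+1} = t₂^{p−1} − t₂^{p+1} and 1/t₁ + 1/t₂ = γ√ω. Set y_j = (2/((p−1)√ω))·arctanh(t_j) for j = 1,2 and define φ : ℝ∖{0} → ℝ by φ(x) = (((p+1)ω/2)·sech²(((p−1)√ω/2)·(x+y₁)))^{1/(p−1)} for x > 0 and φ(x) = −(((p+1)ω/2)·sech²(((p−1)√ω/2)·(x−y₂)))^{1/(p−1)} for x < 0. Then φ is twice continuously differentiable on ℝ∖{0} and satisfies −φ''(x) + ω·φ(x) − |φ(x)|^{p−1}·φ(x) = 0 for all x ≠ 0; the one-sided limits φ(0±) and φ'(0±) exist and satisfy φ'(0−) = φ'(0+) and φ(0+) − φ(0−) = −γ·φ'(0+). -/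

import Mathlib

open MeasureTheory Real Set Filter Topology

/-- Inverse hyperbolic tangent. -/
noncomputable def arctanh (x : ℝ) : ℝ := Real.log ((1 + x) / (1 - x)) / 2

lemma arctanh_facts {t : ℝ} (h0 : 0 < t) (h1 : t < 1) :
    Real.sinh (arctanh t) / Real.cosh (arctanh t) = t ∧
    (1 / Real.cosh (arctanh t)) ^ 2 = 1 - t ^ 2 := by
  set a := arctanh t with ha
  set r := Real.exp a with hrdef
  have hr : 0 < r := Real.exp_pos a
  have hfrac : 0 < (1 + t) / (1 - t) := by
    apply div_pos <;> linarith
  have hr2 : (1 - t) * r ^ 2 = 1 + t := by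
    have : r ^ 2 = Real.exp (Real.log ((1 + t) / (1 - t))) := by
      rw [hrdef, ← Real.exp_nat_mul]
      congr 1
      rw [ha]
      unfold arctanh
      push_cast
      ring
    rw [this, Real.exp_log hfrac, mul_comm, div_mul_cancel₀ _ (by linarith : (1:ℝ) - t ≠ 0)]
  have hsinh : Real.sinh a = (r - r⁻¹) / 2 := by
    rw [Real.sinh_eq, Real.exp_neg, hrdef]
  have hcosh : Real.cosh a = (r + r⁻¹) / 2 := by
    rw [Real.cosh_eq, Real.exp_neg, hrdef]
  have hcpos : 0 < Real.cosh a := Real.cosh_pos _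
  constructor
  · rw [hsinh, hcosh, div_eq_iff (by positivity : (r + r⁻¹) / 2 ≠ 0)]
    field_simp
    linear_combination hr2
  · rw [hcosh]
    have h1t : (1 : ℝ) - t ≠ 0 := by linarith
    field_simp
    linear_combination (2 - (r*r+1)*(1+t)) * hr2

noncomputable def profU (p ω c x : ℝ) : ℝ := (p - 1) * Real.sqrt ω / 2 * (x + c)

noncomputable def prof (p ω c x : ℝ) : ℝ :=
  ((p + 1) * ω / 2 * (1 / Real.cosh (profU p ω c x)) ^ 2) ^ (1 / (p - 1))

noncomputable def prof' (p ω c x : ℝ) : ℝ :=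
  -Real.sqrt ω * (Real.sinh (profU p ω c x) / Real.cosh (profU p ω c x)) * prof p ω c x

noncomputable def prof'' (p ω c x : ℝ) : ℝ :=
  -Real.sqrt ω * ((p - 1) * Real.sqrt ω / 2 / Real.cosh (profU p ω c x) ^ 2) * prof p ω c x
    + -Real.sqrt ω * (Real.sinh (profU p ω c x) / Real.cosh (profU p ω c x)) * prof' p ω c x

lemma inner_pos {p ω : ℝ} (c : ℝ) (hp : 1 < p) (hω : 0 < ω) (x : ℝ) :
    0 < (p + 1) * ω / 2 * (1 / Real.cosh (profU p ω c x)) ^ 2 := by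
  have hc := Real.cosh_pos (profU p ω c x)
  have h1 : 0 < (p + 1) * ω / 2 := by nlinarith
  have h2 : 0 < (1 / Real.cosh (profU p ω c x)) ^ 2 := by positivity
  exact mul_pos h1 h2

lemma prof_pos {p ω : ℝ} (c : ℝ) (hp : 1 < p) (hω : 0 < ω) (x : ℝ) : 0 < prof p ω c x :=
  Real.rpow_pos_of_pos (inner_pos c hp hω x) _

lemma hasDerivAt_profU {p ω : ℝ} (c : ℝ) (x : ℝ) :
    HasDerivAt (fun x => profU p ω c x) ((p - 1) * Real.sqrt ω / 2) x := by
  have h := ((hasDerivAt_id x).add_const c).const_mul ((p - 1) * Real.sqrt ω / 2)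
  simp only [mul_one] at h
  exact h

lemma hasDerivAt_prof {p ω : ℝ} (c : ℝ) (hp : 1 < p) (hω : 0 < ω) (x : ℝ) :
    HasDerivAt (prof p ω c) (prof' p ω c x) x := by
  have hc := Real.cosh_pos (profU p ω c x)
  have hcne : Real.cosh (profU p ω c x) ≠ 0 := ne_of_gt hc
  have hU := hasDerivAt_profU (p := p) (ω := ω) c x
  have hcosh : HasDerivAt (fun x => Real.cosh (profU p ω c x))
      (Real.sinh (profU p ω c x) * ((p - 1) * Real.sqrt ω / 2)) x := hU.cosh
  have hinv : HasDerivAt (fun x => 1 / Real.cosh (profU p ω c x))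
      (-(Real.sinh (profU p ω c x) * ((p - 1) * Real.sqrt ω / 2)) /
        Real.cosh (profU p ω c x) ^ 2) x := by
    simp only [one_div]; exact hcosh.inv hcne
  have hpow := hinv.pow 2
  have hg := hpow.const_mul ((p + 1) * ω / 2)
  have hrpow := hg.rpow_const (p := 1 / (p - 1)) (Or.inl (ne_of_gt (inner_pos c hp hω x)))
  refine hrpow.congr_deriv ?_
  have hgpos := inner_pos c hp hω x
  have hsub : ((p + 1) * ω / 2 * (1 / Real.cosh (profU p ω c x)) ^ 2) ^ (1 / (p - 1) - 1)
      = prof p ω c x / ((p + 1) * ω / 2 * (1 / Real.cosh (profU p ω c x)) ^ 2) := by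
    rw [Real.rpow_sub hgpos, Real.rpow_one]; rfl
  rw [show ((fun x => 1 / Real.cosh (profU p ω c x)) ^ 2) x
    = (1 / Real.cosh (profU p ω c x)) ^ 2 from rfl, hsub]
  simp only [prof']
  have hp1 : p - 1 ≠ 0 := by linarith
  have hω2 : ((p + 1) * ω / 2 : ℝ) ≠ 0 := by nlinarith
  field_simp
  ring_nf
  rw [mul_inv_cancel₀ hcne]
  ring

lemma hasDerivAt_prof' {p ω : ℝ} (c : ℝ) (hp : 1 < p) (hω : 0 < ω) (x : ℝ) :
    HasDerivAt (prof' p ω c) (prof'' p ω c x) x := by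
  have hc := Real.cosh_pos (profU p ω c x)
  have hcne : Real.cosh (profU p ω c x) ≠ 0 := ne_of_gt hc
  have hU := hasDerivAt_profU (p := p) (ω := ω) c x
  have hsinh : HasDerivAt (fun x => Real.sinh (profU p ω c x))
      (Real.cosh (profU p ω c x) * ((p - 1) * Real.sqrt ω / 2)) x := hU.sinh
  have hcosh : HasDerivAt (fun x => Real.cosh (profU p ω c x))
      (Real.sinh (profU p ω c x) * ((p - 1) * Real.sqrt ω / 2)) x := hU.cosh
  have hq : HasDerivAt (fun x => Real.sinh (profU p ω c x) / Real.cosh (profU p ω c x))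
      ((p - 1) * Real.sqrt ω / 2 / Real.cosh (profU p ω c x) ^ 2) x := by
    have := hsinh.div hcosh hcne
    refine this.congr_deriv ?_
    have hid : Real.cosh (profU p ω c x) ^ 2 - Real.sinh (profU p ω c x) ^ 2 = 1 :=
      Real.cosh_sq_sub_sinh_sq _
    field_simp
    linear_combination (p - 1) * hid
  have hmul := ((hq.const_mul (-Real.sqrt ω)).mul (hasDerivAt_prof c hp hω x))
  exact hmul

lemma prof_ode {p ω : ℝ} (c : ℝ) (hp : 1 < p) (hω : 0 < ω) (x : ℝ) :
    -(prof'' p ω c x) + ω * prof p ω c x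
      - |prof p ω c x| ^ (p - 1) * prof p ω c x = 0 := by
  have hc := Real.cosh_pos (profU p ω c x)
  have hcne : Real.cosh (profU p ω c x) ≠ 0 := ne_of_gt hc
  have hgpos := inner_pos c hp hω x
  have hP := prof_pos c hp hω x
  have habs : |prof p ω c x| = prof p ω c x := abs_of_pos hP
  have hp1 : p - 1 ≠ 0 := by linarith
  have hpow : prof p ω c x ^ (p - 1)
      = (p + 1) * ω / 2 * (1 / Real.cosh (profU p ω c x)) ^ 2 := by
    rw [prof, ← Real.rpow_mul hgpos.le,
      show 1 / (p - 1) * (p - 1) = 1 by field_simp, Real.rpow_one]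
  rw [habs, hpow]
  simp only [prof'', prof']
  have hss : Real.sinh (profU p ω c x) ^ 2 = Real.cosh (profU p ω c x) ^ 2 - 1 :=
    Real.sinh_sq _
  have hsq : Real.sqrt ω * Real.sqrt ω = ω := Real.mul_self_sqrt hω.le
  field_simp
  linear_combination (-2 * prof p ω c x * (Real.sqrt ω * Real.sqrt ω)) * hss +
    (prof p ω c x * (1 + p - 2 * Real.cosh (profU p ω c x) ^ 2)) * hsq

lemma contDiff_profU {p ω : ℝ} (c : ℝ) : ContDiff ℝ 2 (fun x => profU p ω c x) := by
  unfold profU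
  exact contDiff_const.mul (contDiff_id.add contDiff_const)

lemma contDiff_prof {p ω : ℝ} (c : ℝ) (hp : 1 < p) (hω : 0 < ω) :
    ContDiff ℝ 2 (prof p ω c) := by
  have hU := contDiff_profU (p := p) (ω := ω) c
  have hcosh : ContDiff ℝ 2 (fun x => Real.cosh (profU p ω c x)) :=
    Real.contDiff_cosh.comp hU
  have hinv : ContDiff ℝ 2 (fun x => 1 / Real.cosh (profU p ω c x)) :=
    contDiff_const.div hcosh (fun x => ne_of_gt (Real.cosh_pos _))
  have hg : ContDiff ℝ 2 (fun x => (p + 1) * ω / 2 * (1 / Real.cosh (profU p ω c x)) ^ 2) :=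
    contDiff_const.mul (hinv.pow 2)
  exact hg.rpow_const_of_ne (fun x => ne_of_gt (inner_pos c hp hω x))

lemma continuous_prof' {p ω : ℝ} (c : ℝ) (hp : 1 < p) (hω : 0 < ω) :
    Continuous (prof' p ω c) := by
  have hU : Continuous (fun x => profU p ω c x) := (contDiff_profU c).continuous
  exact (continuous_const.mul ((Real.continuous_sinh.comp hU).div
    (Real.continuous_cosh.comp hU) (fun x => ne_of_gt (Real.cosh_pos _)))).mul
    (contDiff_prof c hp hω).continuous


set_option maxHeartbeats 2000000 in
/-- The asymmetric profile `φ_{ω,γ}^{as}` is `C²` away from the origin, solves the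
stationary NLS equation `−φ'' + ωφ − |φ|^{p−1}φ = 0` for `x ≠ 0`, and its one-sided
boundary values satisfy the δ'-vertex conditions `φ'(0−) = φ'(0+)` and
`φ(0+) − φ(0−) = −γ·φ'(0+)`. -/
theorem asymmetric_profile_solves_NLS_delta_prime (p γ ω : ℝ) (hp : 1 < p) (hγ : 0 < γ)
    (hω : 0 < ω)
    (t₁ t₂ : ℝ) (ht₁ : 0 < t₁) (ht₁₂ : t₁ < t₂) (ht₂ : t₂ < 1)
    (hmatch : t₁ ^ (p - 1) - t₁ ^ (p + 1) = t₂ ^ (p - 1) - t₂ ^ (p + 1))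
    (hsum : 1 / t₁ + 1 / t₂ = γ * Real.sqrt ω)
    (y₁ y₂ : ℝ) (hy₁ : y₁ = 2 / ((p - 1) * Real.sqrt ω) * arctanh t₁)
    (hy₂ : y₂ = 2 / ((p - 1) * Real.sqrt ω) * arctanh t₂)
    (φ : ℝ → ℝ)
    (hφp : ∀ x : ℝ, 0 < x → φ x = ((p + 1) * ω / 2 *
      (1 / Real.cosh ((p - 1) * Real.sqrt ω / 2 * (x + y₁))) ^ 2) ^ (1 / (p - 1)))
    (hφm : ∀ x : ℝ, x < 0 → φ x = -(((p + 1) * ω / 2 *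
      (1 / Real.cosh ((p - 1) * Real.sqrt ω / 2 * (x - y₂))) ^ 2) ^ (1 / (p - 1)))) :
    ContDiffOn ℝ 2 φ {(0 : ℝ)}ᶜ ∧
    (∀ x : ℝ, x ≠ 0 → -(deriv (deriv φ) x) + ω * φ x - |φ x| ^ (p - 1) * φ x = 0) ∧
    ∃ Lp Lm Dp Dm : ℝ,
      Filter.Tendsto φ (nhdsWithin 0 (Set.Ioi 0)) (nhds Lp) ∧
      Filter.Tendsto φ (nhdsWithin 0 (Set.Iio 0)) (nhds Lm) ∧
      Filter.Tendsto (deriv φ) (nhdsWithin 0 (Set.Ioi 0)) (nhds Dp) ∧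
      Filter.Tendsto (deriv φ) (nhdsWithin 0 (Set.Iio 0)) (nhds Dm) ∧
      Dm = Dp ∧ Lp - Lm = -γ * Dp := by
  have hp1 : p - 1 ≠ 0 := by linarith
  have hsω : (0:ℝ) < Real.sqrt ω := Real.sqrt_pos.mpr hω
  have ht₂0 : 0 < t₂ := lt_trans ht₁ ht₁₂
  have ht₁1 : t₁ < 1 := lt_trans ht₁₂ ht₂
  -- identification with prof
  have hR : ∀ x : ℝ, 0 < x → φ x = prof p ω y₁ x := fun x hx => by
    rw [hφp x hx]; rfl
  have hL : ∀ x : ℝ, x < 0 → φ x = -prof p ω (-y₂) x := fun x hx => by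
    rw [hφm x hx]; simp only [prof, profU, ← sub_eq_add_neg]
  have hevR : ∀ x : ℝ, 0 < x → φ =ᶠ[nhds x] prof p ω y₁ := fun x hx =>
    Filter.eventuallyEq_of_mem (Ioi_mem_nhds hx) (fun y hy => hR y hy)
  have hevL : ∀ x : ℝ, x < 0 → φ =ᶠ[nhds x] (fun y => -prof p ω (-y₂) y) := fun x hx =>
    Filter.eventuallyEq_of_mem (Iio_mem_nhds hx) (fun y hy => hL y hy)
  have hdR : ∀ x : ℝ, 0 < x → deriv φ x = prof' p ω y₁ x := fun x hx => by
    rw [(hevR x hx).deriv_eq, (hasDerivAt_prof y₁ hp hω x).deriv]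
  have hdL : ∀ x : ℝ, x < 0 → deriv φ x = -prof' p ω (-y₂) x := fun x hx => by
    rw [(hevL x hx).deriv_eq]; exact ((hasDerivAt_prof (-y₂) hp hω x).neg).deriv
  have hdevR : ∀ x : ℝ, 0 < x → deriv φ =ᶠ[nhds x] prof' p ω y₁ := fun x hx =>
    Filter.eventuallyEq_of_mem (Ioi_mem_nhds hx) (fun y hy => hdR y hy)
  have hdevL : ∀ x : ℝ, x < 0 → deriv φ =ᶠ[nhds x] (fun y => -prof' p ω (-y₂) y) :=
    fun x hx => Filter.eventuallyEq_of_mem (Iio_mem_nhds hx) (fun y hy => hdL y hy)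
  have hd2R : ∀ x : ℝ, 0 < x → deriv (deriv φ) x = prof'' p ω y₁ x := fun x hx => by
    rw [(hdevR x hx).deriv_eq, (hasDerivAt_prof' y₁ hp hω x).deriv]
  have hd2L : ∀ x : ℝ, x < 0 → deriv (deriv φ) x = -prof'' p ω (-y₂) x := fun x hx => by
    rw [(hdevL x hx).deriv_eq]; exact ((hasDerivAt_prof' (-y₂) hp hω x).neg).deriv
  refine ⟨?_, ?_, ?_⟩
  · -- C² regularity
    intro x hx
    rcases (Set.mem_compl_singleton_iff.mp hx : x ≠ 0).lt_or_gt with h | h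
    · exact (((contDiff_prof (-y₂) hp hω).neg.contDiffAt).congr_of_eventuallyEq
        (hevL x h)).contDiffWithinAt
    · exact (((contDiff_prof y₁ hp hω).contDiffAt).congr_of_eventuallyEq
        (hevR x h)).contDiffWithinAt
  · -- ODE
    intro x hx
    rcases hx.lt_or_gt with h | h
    · rw [hd2L x h, hL x h, abs_neg]
      have hode := prof_ode (-y₂) hp hω x
      linear_combination -hode
    · rw [hd2R x h, hR x h]
      exact prof_ode y₁ hp hω x
  · -- boundary values
    have hby₁ : profU p ω y₁ 0 = arctanh t₁ := by
      simp only [profU, zero_add, hy₁]; field_simp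
    have hby₂ : profU p ω (-y₂) 0 = -arctanh t₂ := by
      simp only [profU, zero_add, hy₂]; field_simp
    have hT₁ := arctanh_facts ht₁ ht₁1
    have hT₂ := arctanh_facts ht₂0 ht₂
    have hLpv : prof p ω y₁ 0 = ((p+1)*ω/2 * (1 - t₁^2))^(1/(p-1)) := by
      simp only [prof]; rw [hby₁, hT₁.2]
    have hDpv : prof' p ω y₁ 0 = -Real.sqrt ω * t₁ * prof p ω y₁ 0 := by
      simp only [prof']; rw [hby₁, hT₁.1]
    have hLmv : prof p ω (-y₂) 0 = ((p+1)*ω/2 * (1 - t₂^2))^(1/(p-1)) := by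
      simp only [prof]; rw [hby₂, Real.cosh_neg, hT₂.2]
    have hDmv : prof' p ω (-y₂) 0 = Real.sqrt ω * t₂ * prof p ω (-y₂) 0 := by
      simp only [prof']; rw [hby₂, Real.sinh_neg, Real.cosh_neg, neg_div, hT₂.1]; ring
    -- the key matching identity
    have e1 : t₁ ^ (p+1) = t₁ ^ (p-1) * t₁^2 := by
      rw [show p+1 = (p-1) + 2 by ring, Real.rpow_add ht₁, Real.rpow_two]
    have e2 : t₂ ^ (p+1) = t₂ ^ (p-1) * t₂^2 := by
      rw [show p+1 = (p-1) + 2 by ring, Real.rpow_add ht₂0, Real.rpow_two]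
    have h1 : t₁ ^ (p-1) * (1 - t₁^2) = t₂ ^ (p-1) * (1 - t₂^2) := by
      linear_combination hmatch + e1 - e2
    have h2 := congrArg (fun z : ℝ => z ^ (1/(p-1))) h1
    rw [Real.mul_rpow (Real.rpow_nonneg ht₁.le _) (by nlinarith : (0:ℝ) ≤ 1 - t₁^2),
      Real.mul_rpow (Real.rpow_nonneg ht₂0.le _) (by nlinarith : (0:ℝ) ≤ 1 - t₂^2),
      ← Real.rpow_mul ht₁.le, ← Real.rpow_mul ht₂0.le,
      show (p-1) * (1/(p-1)) = 1 by field_simp, Real.rpow_one, Real.rpow_one] at h2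
    have hA : (0:ℝ) < (p+1)*ω/2 := by nlinarith
    have key : t₁ * ((p+1)*ω/2 * (1 - t₁^2))^(1/(p-1))
        = t₂ * ((p+1)*ω/2 * (1 - t₂^2))^(1/(p-1)) := by
      rw [Real.mul_rpow hA.le (by nlinarith : (0:ℝ) ≤ 1 - t₁^2),
        Real.mul_rpow hA.le (by nlinarith : (0:ℝ) ≤ 1 - t₂^2)]
      linear_combination (((p+1)*ω/2) ^ (1/(p-1))) * h2
    refine ⟨prof p ω y₁ 0, -prof p ω (-y₂) 0, prof' p ω y₁ 0, -prof' p ω (-y₂) 0,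
      ?_, ?_, ?_, ?_, ?_, ?_⟩
    · exact (((contDiff_prof y₁ hp hω).continuous.tendsto 0).mono_left
        nhdsWithin_le_nhds).congr'
        (Filter.eventuallyEq_of_mem self_mem_nhdsWithin (fun y hy => (hR y hy).symm))
    · exact ((((contDiff_prof (-y₂) hp hω).continuous.neg.tendsto 0).mono_left
        nhdsWithin_le_nhds).congr'
        (Filter.eventuallyEq_of_mem self_mem_nhdsWithin (fun y hy => (hL y hy).symm)))
    · exact (((continuous_prof' y₁ hp hω).tendsto 0).mono_left nhdsWithin_le_nhds).congr'
        (Filter.eventuallyEq_of_mem self_mem_nhdsWithin (fun y hy => (hdR y hy).symm))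
    · exact (((continuous_prof' (-y₂) hp hω).neg.tendsto 0).mono_left
        nhdsWithin_le_nhds).congr'
        (Filter.eventuallyEq_of_mem self_mem_nhdsWithin (fun y hy => (hdL y hy).symm))
    · rw [hDmv, hDpv, hLmv, hLpv]
      linear_combination Real.sqrt ω * key
    · rw [hDpv, hLpv, hLmv]
      have hsum' : t₂ + t₁ = γ * Real.sqrt ω * (t₁ * t₂) := by
        have h := hsum
        field_simp at h
        linarith
      have h4 : t₂ * (((p+1)*ω/2 * (1 - t₁^2))^(1/(p-1))
            + ((p+1)*ω/2 * (1 - t₂^2))^(1/(p-1)))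
          = t₂ * (γ * Real.sqrt ω * t₁ * (((p+1)*ω/2 * (1 - t₁^2))^(1/(p-1)))) := by
        linear_combination (((p+1)*ω/2 * (1 - t₁^2))^(1/(p-1))) * hsum' - key
      have h5 := mul_left_cancel₀ (ne_of_gt ht₂0) h4
      linear_combination h5
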